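/- Let X = (Ω, C) with C = {C_0 = 1_Ω, C_1, C_2, C_3, C_4} be a symmetric homogeneous rainbow of rank 5 on Ω, and set C := C_2 ∪ C_3 ∪ C_4. Assume that for each i ∈ {2,3,4} the partition C_i := {C_0, C_1, C_i, C∖C_i} of Ω×Ω is an association scheme (a homogeneous coherent configuration). Then X is a Jordan scheme: for all classes C, D ∈ C the quantity |C(α)∩D^T(β)| + |D(α)∩C^T(β)| depends only on the class of C containing (α,β). -/
import Mathlib


open Matrix

noncomputable section

namespace JordanPaper

open scoped Classical

variable {Ω : Type*}

/-- The adjacency matrix (over `F`) of a binary relation on `Ω`. -/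
def adj (F : Type*) [Zero F] [One F] (c : Set (Ω × Ω)) : Matrix Ω Ω F :=
  Matrix.of fun a b => if (a, b) ∈ c then 1 else 0

/-- The all-ones matrix. -/
def allOnes (F : Type*) [One F] : Matrix Ω Ω F :=
  Matrix.of fun _ _ => 1

/-- The diagonal relation `1_Δ` on a subset `Δ ⊆ Ω`. -/
def diagRel (Δ : Set Ω) : Set (Ω × Ω) := {p | p.1 = p.2 ∧ p.1 ∈ Δ}

/-- The transposed relation. -/
def transposeRel (c : Set (Ω × Ω)) : Set (Ω × Ω) := {p | (p.2, p.1) ∈ c}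

/-- `outSet c α = c(α) = {β | (α,β) ∈ c}`. -/
def outSet (c : Set (Ω × Ω)) (α : Ω) : Set Ω := {β | (α, β) ∈ c}

/-- A partition of `Ω × Ω` into nonempty pairwise disjoint classes. -/
def IsPartition (P : Set (Set (Ω × Ω))) : Prop :=
  (∀ c ∈ P, c.Nonempty) ∧ (∀ c ∈ P, ∀ d ∈ P, c ≠ d → c ∩ d = ∅) ∧ ⋃₀ P = Set.univ

/-- A partition of `Δ × Δ` into nonempty pairwise disjoint classes. -/
def IsPartitionOn (Δ : Set Ω) (P : Set (Set (Ω × Ω))) : Prop :=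
  (∀ c ∈ P, c.Nonempty) ∧ (∀ c ∈ P, ∀ d ∈ P, c ≠ d → c ∩ d = ∅) ∧ ⋃₀ P = Δ ×ˢ Δ

/-- A rainbow: a partition of `Ω × Ω` such that the diagonal is a union of classes
and the set of classes is closed under transposition. -/
def IsRainbow (P : Set (Set (Ω × Ω))) : Prop :=
  IsPartition P ∧
  (∀ c ∈ P, (c ∩ diagRel (Set.univ : Set Ω)).Nonempty → c ⊆ diagRel (Set.univ : Set Ω)) ∧
  (∀ c ∈ P, transposeRel c ∈ P)

/-- `|c(α) ∩ dᵀ(β)|`. -/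
def cnum (c d : Set (Ω × Ω)) (α β : Ω) : ℕ :=
  (outSet c α ∩ outSet (transposeRel d) β).ncard

/-- `|c(α) ∩ dᵀ(β)| + |d(α) ∩ cᵀ(β)|`. -/
def jnum (c d : Set (Ω × Ω)) (α β : Ω) : ℕ :=
  cnum c d α β + cnum d c α β

/-- The coherence (intersection-number) condition. -/
def IsCoherentCond (P : Set (Set (Ω × Ω))) : Prop :=
  ∀ c ∈ P, ∀ d ∈ P, ∀ f ∈ P, ∀ p ∈ f, ∀ q ∈ f,
    cnum c d (p : Ω × Ω).1 (p : Ω × Ω).2 = cnum c d (q : Ω × Ω).1 (q : Ω × Ω).2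

/-- The Jordan (symmetrized intersection-number) condition. -/
def IsJordanCond (P : Set (Set (Ω × Ω))) : Prop :=
  ∀ c ∈ P, ∀ d ∈ P, ∀ f ∈ P, ∀ p ∈ f, ∀ q ∈ f,
    jnum c d (p : Ω × Ω).1 (p : Ω × Ω).2 = jnum c d (q : Ω × Ω).1 (q : Ω × Ω).2

/-- A coherent configuration. -/
def IsCoherentConfig (P : Set (Set (Ω × Ω))) : Prop := IsRainbow P ∧ IsCoherentCond P

/-- A Jordan configuration. -/
def IsJordanConfig (P : Set (Set (Ω × Ω))) : Prop := IsRainbow P ∧ IsJordanCond P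

/-- An association scheme on a subset `Δ` (homogeneous coherent configuration on `Δ`). -/
def IsAssocSchemeOn (Δ : Set Ω) (P : Set (Set (Ω × Ω))) : Prop :=
  IsPartitionOn Δ P ∧ diagRel Δ ∈ P ∧ (∀ c ∈ P, transposeRel c ∈ P) ∧ IsCoherentCond P

/-- The Jordan product of matrices. -/
def jmul (F : Type*) [Field F] [Fintype Ω] (x y : Matrix Ω Ω F) : Matrix Ω Ω F :=
  (2 : F)⁻¹ • (x * y + y * x)

/-- A coherent algebra. -/
def IsCoherentAlgebra (F : Type*) [Field F] [Fintype Ω] [DecidableEq Ω]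
    (A : Submodule F (Matrix Ω Ω F)) : Prop :=
  (1 : Matrix Ω Ω F) ∈ A ∧ allOnes F ∈ A ∧ (∀ x ∈ A, xᵀ ∈ A) ∧
  (∀ x ∈ A, ∀ y ∈ A, x * y ∈ A) ∧ (∀ x ∈ A, ∀ y ∈ A, Matrix.hadamard x y ∈ A)

/-- A coherent Jordan algebra. -/
def IsCoherentJAlgebra (F : Type*) [Field F] [Fintype Ω] [DecidableEq Ω]
    (A : Submodule F (Matrix Ω Ω F)) : Prop :=
  (1 : Matrix Ω Ω F) ∈ A ∧ allOnes F ∈ A ∧ (∀ x ∈ A, xᵀ ∈ A) ∧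
  (∀ x ∈ A, ∀ y ∈ A, jmul F x y ∈ A) ∧ (∀ x ∈ A, ∀ y ∈ A, Matrix.hadamard x y ∈ A)


lemma cnum_union_right [Fintype Ω] {d d' : Set (Ω × Ω)} (h : Disjoint d d')
    (c : Set (Ω × Ω)) (α β : Ω) :
    cnum c (d ∪ d') α β = cnum c d α β + cnum c d' α β := by
  unfold cnum
  have h1 : outSet (transposeRel (d ∪ d')) β
      = outSet (transposeRel d) β ∪ outSet (transposeRel d') β := rfl
  have h2 : Disjoint (outSet (transposeRel d) β) (outSet (transposeRel d') β) :=
    Set.disjoint_left.mpr fun γ hγ hγ' => Set.disjoint_left.mp h hγ hγ'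
  rw [h1, Set.inter_union_distrib_left]
  exact Set.ncard_union_eq (h2.mono Set.inter_subset_right Set.inter_subset_right)
    (Set.toFinite _) (Set.toFinite _)

lemma cnum_union_left [Fintype Ω] {c c' : Set (Ω × Ω)} (h : Disjoint c c')
    (d : Set (Ω × Ω)) (α β : Ω) :
    cnum (c ∪ c') d α β = cnum c d α β + cnum c' d α β := by
  unfold cnum
  have h1 : outSet (c ∪ c') α = outSet c α ∪ outSet c' α := rfl
  have h2 : Disjoint (outSet c α) (outSet c' α) :=
    Set.disjoint_left.mpr fun γ hγ hγ' => Set.disjoint_left.mp h hγ hγ'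
  rw [h1, Set.union_inter_distrib_right]
  exact Set.ncard_union_eq (h2.mono Set.inter_subset_left Set.inter_subset_left)
    (Set.toFinite _) (Set.toFinite _)

theorem statement13 {Ω : Type*} [Fintype Ω] [Nonempty Ω]
    (C0 C1 C2 C3 C4 : Set (Ω × Ω))
    (hC0 : C0 = diagRel (Set.univ : Set Ω))
    (hdisj : ([C0, C1, C2, C3, C4] : List (Set (Ω × Ω))).Pairwise Disjoint)
    (hne : C0.Nonempty ∧ C1.Nonempty ∧ C2.Nonempty ∧ C3.Nonempty ∧ C4.Nonempty)
    (hcover : C0 ∪ C1 ∪ C2 ∪ C3 ∪ C4 = Set.univ)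
    (hsym : transposeRel C1 = C1 ∧ transposeRel C2 = C2 ∧
      transposeRel C3 = C3 ∧ transposeRel C4 = C4)
    (hAS2 : IsCoherentConfig {C0, C1, C2, (C2 ∪ C3 ∪ C4) \ C2})
    (hAS3 : IsCoherentConfig {C0, C1, C3, (C2 ∪ C3 ∪ C4) \ C3})
    (hAS4 : IsCoherentConfig {C0, C1, C4, (C2 ∪ C3 ∪ C4) \ C4}) :
    IsJordanConfig {C0, C1, C2, C3, C4} ∧
    diagRel (Set.univ : Set Ω) ∈ ({C0, C1, C2, C3, C4} : Set (Set (Ω × Ω))) := by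
  -- extract pairwise disjointness facts
  simp only [List.pairwise_cons, List.mem_cons, List.not_mem_nil, List.mem_singleton,
    forall_eq_or_imp, forall_eq, IsEmpty.forall_iff, and_true, imp_false] at hdisj
  obtain ⟨⟨d01, d02, d03, d04, -⟩, ⟨d12, d13, d14, -⟩, ⟨d23, d24, -⟩, ⟨d34, -⟩, -⟩ := hdisj
  obtain ⟨n0, n1, n2, n3, n4⟩ := hne
  obtain ⟨t1, t2, t3, t4⟩ := hsym
  have t0 : transposeRel C0 = C0 := by
    rw [hC0]; ext p
    simp only [transposeRel, diagRel, Set.mem_setOf_eq, Set.mem_univ, and_true]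
    exact eq_comm
  -- rewrite the complements as unions
  have hR2 : (C2 ∪ C3 ∪ C4) \ C2 = C3 ∪ C4 := by
    ext p
    simp only [Set.mem_diff, Set.mem_union]
    have h3 : p ∈ C3 → p ∉ C2 := fun h => Set.disjoint_right.mp d23 h
    have h4 : p ∈ C4 → p ∉ C2 := fun h => Set.disjoint_right.mp d24 h
    tauto
  have hR3 : (C2 ∪ C3 ∪ C4) \ C3 = C2 ∪ C4 := by
    ext p
    simp only [Set.mem_diff, Set.mem_union]
    have h2 : p ∈ C2 → p ∉ C3 := fun h => Set.disjoint_left.mp d23 h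
    have h4 : p ∈ C4 → p ∉ C3 := fun h => Set.disjoint_right.mp d34 h
    tauto
  have hR4 : (C2 ∪ C3 ∪ C4) \ C4 = C2 ∪ C3 := by
    ext p
    simp only [Set.mem_diff, Set.mem_union]
    have h2 : p ∈ C2 → p ∉ C4 := fun h => Set.disjoint_left.mp d24 h
    have h3 : p ∈ C3 → p ∉ C4 := fun h => Set.disjoint_left.mp d34 h
    tauto
  rw [hR2] at hAS2
  rw [hR3] at hAS3
  rw [hR4] at hAS4
  have h2 := hAS2.2
  have h3 := hAS3.2
  have h4 := hAS4.2
  refine ⟨⟨⟨⟨?_, ?_, ?_⟩, ?_, ?_⟩, ?_⟩, Set.mem_insert_iff.mpr (Or.inl hC0.symm)⟩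
  · -- all classes nonempty
    intro c hc
    rcases hc with rfl | rfl | rfl | rfl | rfl
    exacts [n0, n1, n2, n3, n4]
  · -- pairwise disjoint
    have e01 := d01.symm; have e02 := d02.symm; have e03 := d03.symm
    have e04 := d04.symm; have e12 := d12.symm; have e13 := d13.symm
    have e14 := d14.symm; have e23 := d23.symm; have e24 := d24.symm
    have e34 := d34.symm
    intro c hc d hd hcd
    rcases hc with rfl | rfl | rfl | rfl | rfl <;>
      rcases hd with rfl | rfl | rfl | rfl | rfl <;>
      first
        | exact absurd rfl hcd
        | exact Set.disjoint_iff_inter_eq_empty.mp (by assumption)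
  · -- covers
    ext x
    simp only [Set.sUnion_insert, Set.sUnion_singleton, Set.mem_union, Set.mem_univ, iff_true]
    have hx : x ∈ C0 ∪ C1 ∪ C2 ∪ C3 ∪ C4 := by rw [hcover]; trivial
    simp only [Set.mem_union] at hx
    tauto
  · -- diagonal condition
    intro c hc hcd
    rcases hc with rfl | rfl | rfl | rfl | rfl
    · exact fun x hx => hC0 ▸ hx
    all_goals {
      exfalso
      obtain ⟨x, hx1, hx2⟩ := hcd
      rw [← hC0] at hx2
      first
        | exact Set.disjoint_right.mp d01 hx1 hx2
        | exact Set.disjoint_right.mp d02 hx1 hx2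
        | exact Set.disjoint_right.mp d03 hx1 hx2
        | exact Set.disjoint_right.mp d04 hx1 hx2 }
  · -- closed under transposition
    intro c hc
    rcases hc with rfl | rfl | rfl | rfl | rfl
    · rw [t0]; exact Set.mem_insert _ _
    · rw [t1]; simp
    · rw [t2]; simp
    · rw [t3]; simp
    · rw [t4]; simp
  · -- the Jordan condition
    intro c hc d hd f hf p hp q hq
    obtain ⟨⟨g2, hg2, hp2, hq2⟩, ⟨g3, hg3, hp3, hq3⟩, ⟨g4, hg4, hp4, hq4⟩⟩ :
        (∃ g ∈ ({C0, C1, C2, C3 ∪ C4} : Set (Set (Ω × Ω))), p ∈ g ∧ q ∈ g) ∧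
        (∃ g ∈ ({C0, C1, C3, C2 ∪ C4} : Set (Set (Ω × Ω))), p ∈ g ∧ q ∈ g) ∧
        (∃ g ∈ ({C0, C1, C4, C2 ∪ C3} : Set (Set (Ω × Ω))), p ∈ g ∧ q ∈ g) := by
      rcases hf with hf | hf | hf | hf | hf <;> rw [hf] at hp hq
      · exact ⟨⟨C0, by simp, hp, hq⟩, ⟨C0, by simp, hp, hq⟩, ⟨C0, by simp, hp, hq⟩⟩
      · exact ⟨⟨C1, by simp, hp, hq⟩, ⟨C1, by simp, hp, hq⟩, ⟨C1, by simp, hp, hq⟩⟩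
      · exact ⟨⟨C2, by simp, hp, hq⟩,
          ⟨C2 ∪ C4, by simp, Set.mem_union_left _ hp, Set.mem_union_left _ hq⟩,
          ⟨C2 ∪ C3, by simp, Set.mem_union_left _ hp, Set.mem_union_left _ hq⟩⟩
      · exact ⟨⟨C3 ∪ C4, by simp, Set.mem_union_left _ hp, Set.mem_union_left _ hq⟩,
          ⟨C3, by simp, hp, hq⟩,
          ⟨C2 ∪ C3, by simp, Set.mem_union_right _ hp, Set.mem_union_right _ hq⟩⟩
      · exact ⟨⟨C3 ∪ C4, by simp, Set.mem_union_right _ hp, Set.mem_union_right _ hq⟩,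
          ⟨C2 ∪ C4, by simp, Set.mem_union_right _ hp, Set.mem_union_right _ hq⟩,
          ⟨C4, by simp, hp, hq⟩⟩
    have k2 : ∀ c' ∈ ({C0, C1, C2, C3 ∪ C4} : Set (Set (Ω × Ω))),
        ∀ d' ∈ ({C0, C1, C2, C3 ∪ C4} : Set (Set (Ω × Ω))),
        cnum c' d' p.1 p.2 = cnum c' d' q.1 q.2 :=
      fun c' hc' d' hd' => h2 c' hc' d' hd' g2 hg2 p hp2 q hq2
    have k3 : ∀ c' ∈ ({C0, C1, C3, C2 ∪ C4} : Set (Set (Ω × Ω))),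
        ∀ d' ∈ ({C0, C1, C3, C2 ∪ C4} : Set (Set (Ω × Ω))),
        cnum c' d' p.1 p.2 = cnum c' d' q.1 q.2 :=
      fun c' hc' d' hd' => h3 c' hc' d' hd' g3 hg3 p hp3 q hq3
    have k4 : ∀ c' ∈ ({C0, C1, C4, C2 ∪ C3} : Set (Set (Ω × Ω))),
        ∀ d' ∈ ({C0, C1, C4, C2 ∪ C3} : Set (Set (Ω × Ω))),
        cnum c' d' p.1 p.2 = cnum c' d' q.1 q.2 :=
      fun c' hc' d' hd' => h4 c' hc' d' hd' g4 hg4 p hp4 q hq4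
    -- scheme 2 equalities
    have a00 := k2 C0 (by simp) C0 (by simp)
    have a01 := k2 C0 (by simp) C1 (by simp)
    have a10 := k2 C1 (by simp) C0 (by simp)
    have a11 := k2 C1 (by simp) C1 (by simp)
    have a02 := k2 C0 (by simp) C2 (by simp)
    have a20 := k2 C2 (by simp) C0 (by simp)
    have a12 := k2 C1 (by simp) C2 (by simp)
    have a21 := k2 C2 (by simp) C1 (by simp)
    have a22 := k2 C2 (by simp) C2 (by simp)
    have a2R := k2 C2 (by simp) (C3 ∪ C4) (by simp)
    have aR2 := k2 (C3 ∪ C4) (by simp) C2 (by simp)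
    rw [cnum_union_right d34, cnum_union_right d34] at a2R
    rw [cnum_union_left d34, cnum_union_left d34] at aR2
    -- scheme 3 equalities
    have b03 := k3 C0 (by simp) C3 (by simp)
    have b30 := k3 C3 (by simp) C0 (by simp)
    have b13 := k3 C1 (by simp) C3 (by simp)
    have b31 := k3 C3 (by simp) C1 (by simp)
    have b33 := k3 C3 (by simp) C3 (by simp)
    have b3R := k3 C3 (by simp) (C2 ∪ C4) (by simp)
    have bR3 := k3 (C2 ∪ C4) (by simp) C3 (by simp)
    rw [cnum_union_right d24, cnum_union_right d24] at b3R
    rw [cnum_union_left d24, cnum_union_left d24] at bR3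
    -- scheme 4 equalities
    have c04 := k4 C0 (by simp) C4 (by simp)
    have c40 := k4 C4 (by simp) C0 (by simp)
    have c14 := k4 C1 (by simp) C4 (by simp)
    have c41 := k4 C4 (by simp) C1 (by simp)
    have c44 := k4 C4 (by simp) C4 (by simp)
    have c4R := k4 C4 (by simp) (C2 ∪ C3) (by simp)
    have cR4 := k4 (C2 ∪ C3) (by simp) C4 (by simp)
    rw [cnum_union_right d23, cnum_union_right d23] at c4R
    rw [cnum_union_left d23, cnum_union_left d23] at cR4
    simp only [jnum]
    rcases hc with hc | hc | hc | hc | hc <;>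
      rcases hd with hd | hd | hd | hd | hd <;>
      rw [hc, hd] <;> omega


end JordanPaper

end
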